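/- For a matrix A ∈ GL_d(K) and injective order morphisms φ, ψ : [k] → [d], the k×k minor satisfies the generalized Cramer/Jacobi identity: sgn(φ*) · det(A_{φ,ψ}) · det(A^{-1}) = sgn(ψ*) · det((A^{-1})^t_{φ*,ψ*}), where A_{φ,ψ} = (a_{φ(i),ψ(j)})_{i,j ∈ [k]} and φ*, ψ* are the complementary order morphisms [d−k] → [d]. -/
import Mathlib

open Equiv Finset Matrix

lemma jac_bij {d k : ℕ} (hkd : k ≤ d) (φ : Fin k → Fin d) (φs : Fin (d - k) → Fin d)
    (hφ : StrictMono φ) (hφs : StrictMono φs) (hφc : Set.range φs = (Set.range φ)ᶜ) :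
    Function.Bijective (Sum.elim φ φs) := by
  rw [Fintype.bijective_iff_injective_and_card]
  constructor
  · rintro (a | a) (b | b) h <;> simp only [Sum.elim_inl, Sum.elim_inr] at h
    · exact congrArg Sum.inl (hφ.injective h)
    · exact absurd ⟨a, h⟩ (hφc ▸ Set.mem_range_self b : φs b ∈ (Set.range φ)ᶜ)
    · exact absurd ⟨b, h.symm⟩ (hφc ▸ Set.mem_range_self a : φs a ∈ (Set.range φ)ᶜ)
    · exact congrArg Sum.inr (hφs.injective h)
  · simp [Nat.add_sub_cancel' hkd]

lemma jac_sign_eq_signAux {n : ℕ} (π : Equiv.Perm (Fin n)) :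
    Equiv.Perm.sign π = Equiv.Perm.signAux π := by
  refine Equiv.Perm.swap_induction_on π (by simp) (fun f x y hxy ih => ?_)
  rw [Equiv.Perm.sign_mul, Equiv.Perm.signAux_mul, Equiv.Perm.sign_swap hxy,
    Equiv.Perm.signAux_swap hxy, ih]

lemma jac_sign_eq_pow {n : ℕ} (π : Equiv.Perm (Fin n)) :
    Equiv.Perm.sign π =
      (-1 : ℤˣ) ^ (((Equiv.Perm.finPairsLT n).filter fun x => π x.1 ≤ π x.2).card) := by
  rw [jac_sign_eq_signAux, Equiv.Perm.signAux,
    ← Finset.prod_filter_mul_prod_filter_not (Equiv.Perm.finPairsLT n)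
      (fun x => π x.1 ≤ π x.2)]
  rw [Finset.prod_congr rfl (fun x hx => if_pos (Finset.mem_filter.1 hx).2),
    Finset.prod_congr rfl (fun x hx => if_neg (Finset.mem_filter.1 hx).2),
    Finset.prod_const, Finset.prod_const_one, mul_one]

lemma jac_sign {d k : ℕ} (hkd : k ≤ d) (φ : Fin k → Fin d) (φs : Fin (d - k) → Fin d)
    (hφ : StrictMono φ) (hφs : StrictMono φs) (hφc : Set.range φs = (Set.range φ)ᶜ) :
    Equiv.Perm.sign ((finSumFinEquiv.trans (finCongr (Nat.add_sub_cancel' hkd))).symm.trans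
      (Equiv.ofBijective _ (jac_bij hkd φ φs hφ hφs hφc))) =
      (-1 : ℤˣ) ^ (∑ i : Fin k, ((φ i : ℕ) + (i : ℕ))) := by
  classical
  set e : (Fin k ⊕ Fin (d - k)) ≃ Fin d :=
    finSumFinEquiv.trans (finCongr (Nat.add_sub_cancel' hkd)) with he
  set E : (Fin k ⊕ Fin (d - k)) ≃ Fin d :=
    Equiv.ofBijective _ (jac_bij hkd φ φs hφ hφs hφc) with hE
  set p : Equiv.Perm (Fin d) := e.symm.trans E with hp
  have he1 : ∀ i : Fin k, ((e (Sum.inl i)) : ℕ) = (i : ℕ) := by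
    intro i; simp [he, finCongr_apply]
  have he2 : ∀ j : Fin (d - k), ((e (Sum.inr j)) : ℕ) = k + (j : ℕ) := by
    intro j; simp [he, finCongr_apply]
  have hp1 : ∀ i : Fin k, p (e (Sum.inl i)) = φ i := by
    intro i; simp [hp, hE, Equiv.ofBijective_apply]
  have hp2 : ∀ j : Fin (d - k), p (e (Sum.inr j)) = φs j := by
    intro j; simp [hp, hE, Equiv.ofBijective_apply]
  -- Step A: counting
  have hcount : ∀ i : Fin k,
      (i : ℕ) + (univ.filter fun j => φs j < φ i).card = (φ i : ℕ) := by
    intro i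
    have himg : Finset.Iio (φ i) =
        (Finset.Iio i).image φ ∪ (univ.filter fun j => φs j < φ i).image φs := by
      ext x
      simp only [mem_Iio, mem_union, mem_image, mem_filter, mem_univ, true_and]
      constructor
      · intro hx
        by_cases hxr : x ∈ Set.range φ
        · obtain ⟨i', rfl⟩ := hxr; exact Or.inl ⟨i', hφ.lt_iff_lt.1 hx, rfl⟩
        · obtain ⟨j, rfl⟩ := (hφc ▸ hxr : x ∈ Set.range φs)
          exact Or.inr ⟨j, hx, rfl⟩
      · rintro (⟨i', hi', rfl⟩ | ⟨j, hj, rfl⟩)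
        · exact hφ hi'
        · exact hj
    have hdisj : Disjoint ((Finset.Iio i).image φ)
        ((univ.filter fun j => φs j < φ i).image φs) := by
      rw [Finset.disjoint_left]
      rintro x hx hx'
      obtain ⟨i', _, rfl⟩ := mem_image.1 hx
      obtain ⟨j, _, hj⟩ := mem_image.1 hx'
      exact (hφc ▸ Set.mem_range_self j : φs j ∈ (Set.range φ)ᶜ) ⟨i', hj.symm⟩
    have hc := congrArg Finset.card himg
    rw [Finset.card_union_of_disjoint hdisj, Finset.card_image_of_injective _ hφ.injective,
      Finset.card_image_of_injective _ hφs.injective, Fin.card_Iio, Fin.card_Iio] at hc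
    omega
  -- Step B: inversion count
  have h1 : (univ.filter fun q : Fin k × Fin (d - k) => φs q.2 < φ q.1).card
      = ((Equiv.Perm.finPairsLT d).filter fun x => p x.1 ≤ p x.2).card := by
    refine Finset.card_bij (fun q _ => ⟨e (Sum.inr q.2), e (Sum.inl q.1)⟩) ?_ ?_ ?_
    · intro q hq
      rw [mem_filter] at hq ⊢
      refine ⟨Equiv.Perm.mem_finPairsLT.2 ?_, ?_⟩
      · show e (Sum.inl q.1) < e (Sum.inr q.2)
        rw [Fin.lt_def, he1, he2]
        have := q.1.isLt
        omega
      · show p (e (Sum.inr q.2)) ≤ p (e (Sum.inl q.1))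
        rw [hp1, hp2]
        exact le_of_lt hq.2
    · intro q hq q' hq' hEq
      simp only [Sigma.mk.inj_iff, heq_eq_eq] at hEq
      have h2 := e.injective hEq.1
      have h3 := e.injective hEq.2
      exact Prod.ext (Sum.inl_injective h3) (Sum.inr_injective h2)
    · rintro ⟨a, b⟩ hx
      rw [mem_filter, Equiv.Perm.mem_finPairsLT] at hx
      obtain ⟨hlt, hle⟩ := hx
      have ea : e (e.symm a) = a := e.apply_symm_apply a
      have eb : e (e.symm b) = b := e.apply_symm_apply b
      rcases ha : e.symm a with ia | ja <;> rcases hb : e.symm b with ib | jb <;>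
        rw [ha] at ea <;> rw [hb] at eb
      · exfalso
        rw [← ea, ← eb, hp1, hp1] at hle
        have h4 : ia ≤ ib := hφ.le_iff_le.1 hle
        have h5 : (b : ℕ) < (a : ℕ) := hlt
        rw [← ea, ← eb, he1, he1] at h5
        omega
      · exfalso
        have h5 : (b : ℕ) < (a : ℕ) := hlt
        rw [← ea, ← eb, he1, he2] at h5
        have := jb.isLt
        have := ia.isLt
        omega
      · refine ⟨(ib, ja), ?_, ?_⟩
        · rw [mem_filter]
          refine ⟨mem_univ _, ?_⟩
          rw [← ea, ← eb, hp2, hp1] at hle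
          refine lt_of_le_of_ne hle ?_
          intro hEq2
          exact (hφc ▸ Set.mem_range_self ja : φs ja ∈ (Set.range φ)ᶜ) ⟨ib, hEq2.symm⟩
        · simp only
          rw [ea, eb]
      · exfalso
        rw [← ea, ← eb, hp2, hp2] at hle
        have h4 : ja ≤ jb := hφs.le_iff_le.1 hle
        have h5 : (b : ℕ) < (a : ℕ) := hlt
        rw [← ea, ← eb, he2, he2] at h5
        omega
  have h2 : (univ.filter fun q : Fin k × Fin (d - k) => φs q.2 < φ q.1).card
      = ∑ i : Fin k, (univ.filter fun j => φs j < φ i).card := by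
    rw [← Fintype.card_subtype,
      Fintype.card_congr
        (Equiv.subtypeProdEquivSigmaSubtype (fun (i : Fin k) (j : Fin (d - k)) => φs j < φ i)),
      Fintype.card_sigma]
    exact Finset.sum_congr rfl fun i _ => Fintype.card_subtype _
  have h3 : ∑ i : Fin k, ((φ i : ℕ) + (i : ℕ))
      = (∑ i : Fin k, (univ.filter fun j => φs j < φ i).card) + 2 * ∑ i : Fin k, (i : ℕ) := by
    have h4 : ∑ i : Fin k, ((i : ℕ) + (univ.filter fun j => φs j < φ i).card)
        = ∑ i : Fin k, (φ i : ℕ) := Finset.sum_congr rfl fun i _ => hcount i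
    rw [Finset.sum_add_distrib] at h4
    rw [Finset.sum_add_distrib]
    omega
  rw [jac_sign_eq_pow, ← h1, h2, h3, pow_add, pow_mul, neg_one_sq, one_pow, mul_one]



/-- Generalized Cramer/Jacobi identity for minors: for `A ∈ GL_d(K)` and injective order
morphisms `φ, ψ : [k] → [d]` with complementary order morphisms `φ*, ψ* : [d−k] → [d]`,
`sgn(φ*) · det(A_{φ,ψ}) · det(A⁻¹) = sgn(ψ*) · det((A⁻¹)ᵗ_{φ*,ψ*})`,
where `sgn χ = (−1)^{Σ_i χ*(i)}` (so `sgn(φ*) = (−1)^{Σ_i φ(i)}`), and `[n] = {1,…,n}` is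
modelled by `Fin n` (0-based, whence the `+ 1`). -/
theorem stmt14 {K : Type*} [Field K] {d k : ℕ} (hkd : k ≤ d)
    (A : Matrix (Fin d) (Fin d) K) (hA : IsUnit A.det)
    (φ ψ : Fin k → Fin d) (φs ψs : Fin (d - k) → Fin d)
    (hφ : StrictMono φ) (hψ : StrictMono ψ) (hφs : StrictMono φs) (hψs : StrictMono ψs)
    (hφc : Set.range φs = (Set.range φ)ᶜ) (hψc : Set.range ψs = (Set.range ψ)ᶜ) :
    ((-1 : K) ^ (∑ i, ((φ i : ℕ) + 1))) * (A.submatrix φ ψ).det * A⁻¹.det =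
      ((-1 : K) ^ (∑ i, ((ψ i : ℕ) + 1))) * ((A⁻¹.transpose).submatrix φs ψs).det := by
  classical
  have hBA : A⁻¹ * A = 1 := Matrix.nonsing_inv_mul A hA
  set Eφ : (Fin k ⊕ Fin (d - k)) ≃ Fin d :=
    Equiv.ofBijective _ (jac_bij hkd φ φs hφ hφs hφc) with hEφ
  set Eψ : (Fin k ⊕ Fin (d - k)) ≃ Fin d :=
    Equiv.ofBijective _ (jac_bij hkd ψ ψs hψ hψs hψc) with hEψ
  have hA'blocks : A.submatrix ⇑Eφ ⇑Eψ =
      fromBlocks (A.submatrix φ ψ) (A.submatrix φ ψs) (A.submatrix φs ψ) (A.submatrix φs ψs) := by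
    ext (i | i) (j | j) <;> rfl
  have hB'blocks : A⁻¹.submatrix ⇑Eψ ⇑Eφ =
      fromBlocks (A⁻¹.submatrix ψ φ) (A⁻¹.submatrix ψ φs)
        (A⁻¹.submatrix ψs φ) (A⁻¹.submatrix ψs φs) := by
    ext (i | i) (j | j) <;> rfl
  have hB'A' : A⁻¹.submatrix ⇑Eψ ⇑Eφ * A.submatrix ⇑Eφ ⇑Eψ = 1 := by
    have := Matrix.submatrix_mul_equiv A⁻¹ A (⇑Eψ) Eφ (⇑Eψ)
    rw [this, hBA, Matrix.submatrix_one_equiv]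
  rw [hA'blocks, hB'blocks, fromBlocks_multiply, ← fromBlocks_one] at hB'A'
  obtain ⟨h11, h12, h21, h22⟩ := Matrix.fromBlocks_inj.1 hB'A'
  have key : (A⁻¹.submatrix ⇑Eψ ⇑Eφ) *
      fromBlocks (A.submatrix φ ψ) 0 (A.submatrix φs ψ) 1 =
      fromBlocks 1 (A⁻¹.submatrix ψ φs) 0 (A⁻¹.submatrix ψs φs) := by
    rw [hB'blocks, fromBlocks_multiply, Matrix.mul_zero, Matrix.mul_zero, Matrix.mul_one,
      Matrix.mul_one, zero_add, zero_add, h11, h21]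
  have hdet1 := congrArg Matrix.det key
  rw [Matrix.det_mul, Matrix.det_fromBlocks_zero₁₂, Matrix.det_fromBlocks_zero₂₁,
    Matrix.det_one] at hdet1
  simp only [Matrix.det_one, one_mul, mul_one] at hdet1
  -- hdet1 : det (B.submatrix Eψ Eφ) * det (A.submatrix φ ψ) = det (B.submatrix ψs φs)
  set e : (Fin k ⊕ Fin (d - k)) ≃ Fin d :=
    finSumFinEquiv.trans (finCongr (Nat.add_sub_cancel' hkd)) with he
  set pφ : Equiv.Perm (Fin d) := e.symm.trans Eφ with hpφ
  set pψ : Equiv.Perm (Fin d) := e.symm.trans Eψ with hpψ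
  have hsub : A⁻¹.submatrix ⇑Eψ ⇑Eφ =
      ((A⁻¹.submatrix ⇑pψ id).submatrix id ⇑pφ).submatrix ⇑e ⇑e := by
    ext x y
    simp [Matrix.submatrix_apply, hpψ, hpφ]
  have hdetB' : (A⁻¹.submatrix ⇑Eψ ⇑Eφ).det =
      (Equiv.Perm.sign pφ : K) * ((Equiv.Perm.sign pψ : K) * A⁻¹.det) := by
    rw [hsub, Matrix.det_submatrix_equiv_self, Matrix.det_permute', Matrix.det_permute]
  have hsφ := jac_sign hkd φ φs hφ hφs hφc
  have hsψ := jac_sign hkd ψ ψs hψ hψs hψc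
  rw [show ((finSumFinEquiv.trans (finCongr (Nat.add_sub_cancel' hkd))).symm.trans
      (Equiv.ofBijective _ (jac_bij hkd φ φs hφ hφs hφc))) = pφ from rfl] at hsφ
  rw [show ((finSumFinEquiv.trans (finCongr (Nat.add_sub_cancel' hkd))).symm.trans
      (Equiv.ofBijective _ (jac_bij hkd ψ ψs hψ hψs hψc))) = pψ from rfl] at hsψ
  have hcφ : (Equiv.Perm.sign pφ : K) = (-1 : K) ^ (∑ i : Fin k, ((φ i : ℕ) + (i : ℕ))) := by
    rw [hsφ]; push_cast; ring
  have hcψ : (Equiv.Perm.sign pψ : K) = (-1 : K) ^ (∑ i : Fin k, ((ψ i : ℕ) + (i : ℕ))) := by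
    rw [hsψ]; push_cast; ring
  -- transpose on RHS
  have hT : ((A⁻¹.transpose).submatrix φs ψs).det = (A⁻¹.submatrix ψs φs).det := by
    rw [← Matrix.transpose_submatrix, Matrix.det_transpose]
  rw [hT, ← hdet1, hdetB', hcφ, hcψ]
  -- now pure sign arithmetic
  set a := ∑ i : Fin k, (φ i : ℕ) with ha
  set b := ∑ i : Fin k, (ψ i : ℕ) with hb
  set T := ∑ i : Fin k, (i : ℕ) with hTsum
  have e1 : ∑ i : Fin k, ((φ i : ℕ) + 1) = a + k := by
    rw [Finset.sum_add_distrib]; simp [ha]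
  have e2 : ∑ i : Fin k, ((ψ i : ℕ) + 1) = b + k := by
    rw [Finset.sum_add_distrib]; simp [hb]
  have e3 : ∑ i : Fin k, ((φ i : ℕ) + (i : ℕ)) = a + T := by
    rw [Finset.sum_add_distrib]
  have e4 : ∑ i : Fin k, ((ψ i : ℕ) + (i : ℕ)) = b + T := by
    rw [Finset.sum_add_distrib]
  rw [e1, e2, e3, e4]
  have hsign : (-1 : K) ^ (b + k) * ((-1 : K) ^ (a + T) * (-1 : K) ^ (b + T)) =
      (-1 : K) ^ (a + k) := by
    rw [← pow_add, ← pow_add, show b + k + (a + T + (b + T)) = a + k + 2 * (b + T) by omega,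
      pow_add, pow_mul, neg_one_sq, one_pow, mul_one]
  calc (-1 : K) ^ (a + k) * (A.submatrix φ ψ).det * A⁻¹.det
      = ((-1 : K) ^ (b + k) * ((-1 : K) ^ (a + T) * (-1 : K) ^ (b + T))) *
        (A.submatrix φ ψ).det * A⁻¹.det := by rw [hsign]
    _ = (-1 : K) ^ (b + k) *
        ((-1 : K) ^ (a + T) * ((-1 : K) ^ (b + T) * A⁻¹.det) * (A.submatrix φ ψ).det) := by
        ring
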